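/- Let G be the graph obtained by subdividing every edge of the complete graph K_n exactly once (the full subdivision of K_n), n ≥ 2. Then box(G) ≤ ⌈log₂ log₂ n⌉ + 2. -/

import Mathlib

namespace BoxAux


/-- The most significant bit of a nonzero number is set. -/
lemma testBit_log2 {z : ℕ} (hz : z ≠ 0) : z.testBit (Nat.log 2 z) = true := by
  have h1 : 2 ^ Nat.log 2 z ≤ z := Nat.pow_log_le_self 2 hz
  have h2 : z < 2 ^ (Nat.log 2 z + 1) := Nat.lt_pow_succ_log_self (by norm_num) z
  rw [Nat.testBit_eq_decide_div_mod_eq]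
  have : z / 2 ^ Nat.log 2 z = 1 := by
    rw [Nat.pow_succ] at h2
    exact Nat.div_eq_of_lt_le (by simpa using h1) (by omega)
  rw [this]
  norm_num

/-- Bits above the most significant bit are zero. -/
lemma testBit_gt_log2 {z j : ℕ} (hj : Nat.log 2 z < j) : z.testBit j = false := by
  rcases eq_or_ne z 0 with rfl | hz
  · simp
  · apply Nat.testBit_lt_two_pow
    have h2 : z < 2 ^ (Nat.log 2 z + 1) := Nat.lt_pow_succ_log_self (by norm_num) z
    exact lt_of_lt_of_le h2 (Nat.pow_le_pow_right (by norm_num) hj)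

lemma xor_xor_cancel (a b M : ℕ) : (a ^^^ M) ^^^ (b ^^^ M) = a ^^^ b := by
  apply Nat.eq_of_testBit_eq
  intro i
  simp [Nat.testBit_xor]
  cases a.testBit i <;> cases b.testBit i <;> cases M.testBit i <;> rfl

lemma lt_iff_testBit_log2 {a b : ℕ} (h : a ≠ b) :
    a < b ↔ a.testBit (Nat.log 2 (a ^^^ b)) = false := by
  set z := a ^^^ b with hzdef
  have hz : z ≠ 0 := by
    intro h0
    exact h (xor_eq_zero_iff.mp h0)
  set p := Nat.log 2 z with hp
  have hdiff : a.testBit p ≠ b.testBit p := by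
    have := testBit_log2 hz
    rw [hzdef, Nat.testBit_xor] at this
    intro he; rw [he] at this; simp at this; exact this rfl
  have hagree : ∀ j, p < j → a.testBit j = b.testBit j := by
    intro j hj
    have := testBit_gt_log2 (z := z) hj
    rw [hzdef, Nat.testBit_xor] at this
    cases hA : a.testBit j <;> cases hB : b.testBit j <;> simp_all
  constructor
  · intro hab
    by_contra hT
    have hT' : a.testBit p = true := by simpa using hT
    have hB : b.testBit p = false := by
      cases hb : b.testBit p
      · rfl
      · exact absurd (hT'.trans hb.symm) hdiff
    have : b < a := Nat.lt_of_testBit p hB hT' (fun j hj => (hagree j hj).symm)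
    omega
  · intro hF
    have hB : b.testBit p = true := by
      cases hb : b.testBit p
      · exact absurd (hF.trans hb.symm) hdiff
      · rfl
    exact Nat.lt_of_testBit p hF hB hagree



/-- A number whose `j`-th bit (for `j < m`) is the `i`-th bit of `j`. -/
def maskNum (i : ℕ) : ℕ → ℕ
  | 0 => 0
  | m + 1 => (if Nat.testBit m i then 2 ^ m else 0) + maskNum i m

lemma maskNum_lt (i m : ℕ) : maskNum i m < 2 ^ m := by
  induction m with
  | zero => simp [maskNum]
  | succ m ih =>
    rw [maskNum, pow_succ]
    split <;> omega

lemma testBit_maskNum (i m j : ℕ) :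
    (maskNum i m).testBit j = (decide (j < m) && j.testBit i) := by
  induction m with
  | zero => simp [maskNum]
  | succ m ih =>
    rw [maskNum]
    by_cases hb : Nat.testBit m i
    · rw [if_pos hb]
      have h2 : (2 ^ m + maskNum i m).testBit j
          = if j < m then (maskNum i m).testBit j else Nat.testBit 1 (j - m) := by
        have := Nat.testBit_two_pow_mul_add 1 (maskNum_lt i m) j
        simpa using this
      rw [h2]
      rcases lt_trichotomy j m with h | rfl | h
      · rw [if_pos h, ih]
        simp [h, Nat.lt_succ_of_lt h]
      · simp [hb]
      · rw [if_neg (by omega)]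
        have : j - m ≠ 0 := by omega
        simp [Nat.testBit_eq_false_of_lt (by
          calc (1:ℕ) < 2 ^ 1 := by norm_num
          _ ≤ 2 ^ (j - m) := Nat.pow_le_pow_right (by norm_num) (by omega)),
          show ¬ j < m + 1 by omega]
    · rw [if_neg hb, zero_add, ih]
      rcases eq_or_ne j m with rfl | hne
      · simp [hb]
      · by_cases h : j < m
        · simp [h, Nat.lt_succ_of_lt h]
        · simp [show ¬ j < m + 1 by omega, h]

lemma exists_diff_bit {k p q : ℕ} (hp : p < 2 ^ k) (hq : q < 2 ^ k) (hne : p ≠ q) :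
    ∃ i, i < k ∧ p.testBit i ≠ q.testBit i := by
  by_contra hc
  push_neg at hc
  apply hne
  apply Nat.eq_of_testBit_eq
  intro i
  by_cases hi : i < k
  · exact hc i hi
  · rw [Nat.testBit_lt_two_pow, Nat.testBit_lt_two_pow]
    · exact lt_of_lt_of_le hq (Nat.pow_le_pow_right (by norm_num) (by omega))
    · exact lt_of_lt_of_le hp (Nat.pow_le_pow_right (by norm_num) (by omega))


lemma cmp_mask {u x : ℕ} (M : ℕ) (h : u ≠ x) :
    (u ^^^ M < x ^^^ M ↔
      ((u.testBit (Nat.log 2 (u ^^^ x))) ^^ (M.testBit (Nat.log 2 (u ^^^ x)))) = false) ∧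
    (x ^^^ M < u ^^^ M ↔
      ((u.testBit (Nat.log 2 (u ^^^ x))) ^^ (M.testBit (Nat.log 2 (u ^^^ x)))) = true) := by
  have hne : u ^^^ M ≠ x ^^^ M := by
    intro h'
    exact h (by rw [← xor_cancel_right u M, h', xor_cancel_right])
  have h1 : u ^^^ M < x ^^^ M ↔
      ((u.testBit (Nat.log 2 (u ^^^ x))) ^^ (M.testBit (Nat.log 2 (u ^^^ x)))) = false := by
    rw [lt_iff_testBit_log2 hne, xor_xor_cancel, Nat.testBit_xor]
  refine ⟨h1, ?_⟩
  have h2 : x ^^^ M < u ^^^ M ↔ ¬ (u ^^^ M < x ^^^ M) := by omega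
  rw [h2, h1]
  simp

lemma key (k u x y : ℕ) (hu : u < 2 ^ 2 ^ k) (hx : x < 2 ^ 2 ^ k) (hy : y < 2 ^ 2 ^ k)
    (hux : u ≠ x) (huy : u ≠ y) :
    ∃ M : ℕ, (M = 0 ∨ ∃ i, i < k ∧ M = maskNum i (2 ^ k)) ∧
      ((u ^^^ M < x ^^^ M ∧ u ^^^ M < y ^^^ M) ∨
       (x ^^^ M < u ^^^ M ∧ y ^^^ M < u ^^^ M)) := by
  set p := Nat.log 2 (u ^^^ x) with hpdef
  set q := Nat.log 2 (u ^^^ y) with hqdef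
  have hp : p < 2 ^ k := by
    have hz : u ^^^ x ≠ 0 := fun h0 => hux (xor_eq_zero_iff.mp h0)
    exact (Nat.log_lt_iff_lt_pow (by norm_num) hz).mpr (Nat.xor_lt_two_pow hu hx)
  have hq : q < 2 ^ k := by
    have hz : u ^^^ y ≠ 0 := fun h0 => huy (xor_eq_zero_iff.mp h0)
    exact (Nat.log_lt_iff_lt_pow (by norm_num) hz).mpr (Nat.xor_lt_two_pow hu hy)
  by_cases hb : u.testBit p = u.testBit q
  · refine ⟨0, Or.inl rfl, ?_⟩
    have c1 := cmp_mask (u := u) (x := x) 0 hux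
    have c2 := cmp_mask (u := u) (x := y) 0 huy
    rw [← hpdef] at c1
    rw [← hqdef] at c2
    cases hup : u.testBit p with
    | false =>
      exact Or.inl ⟨c1.1.mpr (by simp [hup]), c2.1.mpr (by simp [← hb, hup])⟩
    | true =>
      exact Or.inr ⟨c1.2.mpr (by simp [hup]), c2.2.mpr (by simp [← hb, hup])⟩
  · have hpq : p ≠ q := fun h => hb (by rw [h])
    obtain ⟨i, hik, hbit⟩ := exists_diff_bit hp hq hpq
    refine ⟨maskNum i (2 ^ k), Or.inr ⟨i, hik, rfl⟩, ?_⟩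
    have c1 := cmp_mask (u := u) (x := x) (maskNum i (2 ^ k)) hux
    have c2 := cmp_mask (u := u) (x := y) (maskNum i (2 ^ k)) huy
    rw [← hpdef] at c1
    rw [← hqdef] at c2
    have hMp : (maskNum i (2 ^ k)).testBit p = p.testBit i := by
      rw [testBit_maskNum]; simp [hp]
    have hMq : (maskNum i (2 ^ k)).testBit q = q.testBit i := by
      rw [testBit_maskNum]; simp [hq]
    rw [hMp] at c1
    rw [hMq] at c2
    have heq : (u.testBit p ^^ p.testBit i) = (u.testBit q ^^ q.testBit i) := by
      revert hb hbit
      cases u.testBit p <;> cases u.testBit q <;> cases p.testBit i <;> cases q.testBit i <;>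
        simp
    cases hv : (u.testBit p ^^ p.testBit i) with
    | false =>
      exact Or.inl ⟨c1.1.mpr hv, c2.1.mpr (by rw [← heq, hv])⟩
    | true =>
      exact Or.inr ⟨c1.2.mpr hv, c2.2.mpr (by rw [← heq, hv])⟩


end BoxAux


def SimpleGraph.HasBoxRep {V : Type*} (G : SimpleGraph V) (k : ℕ) : Prop :=
  ∃ l r : V → Fin k → ℝ, (∀ v i, l v i ≤ r v i) ∧
    ∀ u v : V, u ≠ v →
      (G.Adj u v ↔ ∀ i, max (l u i) (l v i) ≤ min (r u i) (r v i))

noncomputable def SimpleGraph.boxicity {V : Type*} (G : SimpleGraph V) : ℕ :=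
  sInf {k | G.HasBoxRep k}

def fullSubdivision {V : Type*} (H : SimpleGraph V) : SimpleGraph (V ⊕ H.edgeSet) :=
  SimpleGraph.fromRel (fun a b =>
    match a, b with
    | Sum.inl v, Sum.inr e => v ∈ (e : Sym2 V)
    | _, _ => False)

open BoxAux in
theorem boxicity_fullSubdivision_complete_upper (n : ℕ) (hn : 2 ≤ n) :
    (fullSubdivision (⊤ : SimpleGraph (Fin n))).boxicity ≤
      Nat.clog 2 (Nat.clog 2 n) + 2 := by
  classical
  set k := Nat.clog 2 (Nat.clog 2 n) with hk
  have hN : n ≤ 2 ^ 2 ^ k := by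
    calc n ≤ 2 ^ Nat.clog 2 n := Nat.le_pow_clog (by norm_num) n
    _ ≤ 2 ^ 2 ^ k := Nat.pow_le_pow_right (by norm_num)
        (Nat.le_pow_clog (by norm_num) _)
  have hbox : (fullSubdivision (⊤ : SimpleGraph (Fin n))).HasBoxRep (k + 2) := by
    set E := (⊤ : SimpleGraph (Fin n)).edgeSet with hE
    haveI : Fintype E := Fintype.ofFinite E
    set eqv := Fintype.equivFin E with heqv
    set Mf : ℕ → ℕ := fun j => if j = 0 then 0 else maskNum (j - 1) (2 ^ k) with hMf
    set σ : ℕ → Fin n → ℝ := fun j v => ((v.val ^^^ Mf j : ℕ) : ℝ) with hσ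
    set elo : ℕ → Sym2 (Fin n) → ℝ := fun j =>
      Sym2.lift ⟨fun a b => min (σ j a) (σ j b), fun a b => min_comm _ _⟩ with helo
    set ehi : ℕ → Sym2 (Fin n) → ℝ := fun j =>
      Sym2.lift ⟨fun a b => max (σ j a) (σ j b), fun a b => max_comm _ _⟩ with hehi
    set φ : E → ℝ := fun e => ((eqv e : ℕ) : ℝ) with hφ
    set L : (Fin n ⊕ ↥E) → Fin (k + 2) → ℝ := fun w d => match w with
        | Sum.inl v => if (d : ℕ) ≤ k then σ d v else 0
        | Sum.inr e => if (d : ℕ) ≤ k then elo d e.val else φ e with hL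
    set R : (Fin n ⊕ ↥E) → Fin (k + 2) → ℝ := fun w d => match w with
        | Sum.inl v => if (d : ℕ) ≤ k then σ d v else (Fintype.card E : ℝ)
        | Sum.inr e => if (d : ℕ) ≤ k then ehi d e.val else φ e with hR
    have hσinj : ∀ (j : ℕ) (a b : Fin n), σ j a = σ j b → a = b := by
      intro j a b hab
      rw [hσ] at hab
      have : a.val ^^^ Mf j = b.val ^^^ Mf j := Nat.cast_injective hab
      have : a.val = b.val := by
        rw [← xor_cancel_right a.val (Mf j), this, xor_cancel_right]
      exact Fin.val_injective this
    -- the main case: a vertex against a subdivision vertex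
    have hC : ∀ (a : Fin n) (e : ↥E),
        ((fullSubdivision (⊤ : SimpleGraph (Fin n))).Adj (Sum.inl a) (Sum.inr e) ↔
          ∀ d, max (L (Sum.inl a) d) (L (Sum.inr e) d) ≤
            min (R (Sum.inl a) d) (R (Sum.inr e) d)) := by
      intro a e
      have hadj : ((fullSubdivision (⊤ : SimpleGraph (Fin n))).Adj (Sum.inl a) (Sum.inr e) ↔
          a ∈ e.val) := by
        simp [fullSubdivision, SimpleGraph.fromRel_adj]
      rw [hadj]
      constructor
      · intro hmem d
        by_cases hd : (d : ℕ) ≤ k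
        · obtain ⟨w, hw⟩ := Sym2.mem_iff_exists.mp hmem
          simp only [hL, hR, hw, if_pos hd, helo, hehi, Sym2.lift_mk]
          exact max_le (le_min le_rfl (le_max_left _ _))
            (le_min (min_le_left _ _)
              (le_trans (min_le_left _ _) (le_max_left _ _)))
        · simp only [hL, hR, if_neg hd, hφ]
          refine max_le (le_min (Nat.cast_nonneg _) (Nat.cast_nonneg _))
            (le_min ?_ le_rfl)
          exact_mod_cast Nat.le_of_lt (eqv e).isLt
      · intro h
        by_contra hmem
        obtain ⟨s, hs⟩ := e
        induction s using Sym2.ind with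
        | _ x y =>
          rw [hE, SimpleGraph.mem_edgeSet, SimpleGraph.top_adj] at hs
          have hax : a ≠ x := fun h' => hmem (by rw [h']; exact Sym2.mem_mk_left _ _)
          have hay : a ≠ y := fun h' => hmem (by rw [h']; exact Sym2.mem_mk_right _ _)
          obtain ⟨M, hM, hdisj⟩ := key k a.val x.val y.val
            (lt_of_lt_of_le a.isLt hN) (lt_of_lt_of_le x.isLt hN)
            (lt_of_lt_of_le y.isLt hN)
            (fun h' => hax (Fin.val_injective h'))
            (fun h' => hay (Fin.val_injective h'))
          obtain ⟨j, hjk, hMj⟩ : ∃ j, j ≤ k ∧ Mf j = M := by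
            rcases hM with rfl | ⟨i, hik, rfl⟩
            · exact ⟨0, Nat.zero_le _, by simp [hMf]⟩
            · exact ⟨i + 1, by omega, by simp [hMf]⟩
          have hd := h ⟨j, by omega⟩
          simp only [hL, hR, if_pos hjk, helo, hehi, Sym2.lift_mk] at hd
          rcases hdisj with ⟨h1, h2⟩ | ⟨h1, h2⟩
          · have hlt : σ j a < min (σ j x) (σ j y) := by
              simp only [hσ]
              rw [hMj]
              exact lt_min (by exact_mod_cast h1) (by exact_mod_cast h2)
            have : min (σ j x) (σ j y) ≤ σ j a :=
              le_trans (le_trans (le_max_right _ _) hd) (min_le_left _ _)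
            exact absurd this (not_le.mpr hlt)
          · have hlt : max (σ j x) (σ j y) < σ j a := by
              simp only [hσ]
              rw [hMj]
              exact max_lt (by exact_mod_cast h1) (by exact_mod_cast h2)
            have : σ j a ≤ max (σ j x) (σ j y) :=
              le_trans (le_trans (le_max_left _ _) hd) (min_le_right _ _)
            exact absurd this (not_le.mpr hlt)
    refine ⟨L, R, ?_, ?_⟩
    · rintro (v | e) d
      · simp only [hL, hR]
        split
        · exact le_refl _
        · exact Nat.cast_nonneg _
      · simp only [hL, hR]
        split
        · induction e.val using Sym2.ind with
          | _ x y => simpa [helo, hehi] using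
              le_trans (min_le_left (σ d x) (σ d y)) (le_max_left _ _)
        · exact le_refl _
    · rintro (a | e) (b | f) hne
      · -- two original vertices: never adjacent
        have hab : a ≠ b := fun h' => hne (by rw [h'])
        have hadj : ¬ (fullSubdivision (⊤ : SimpleGraph (Fin n))).Adj
            (Sum.inl a) (Sum.inl b) := by
          simp [fullSubdivision, SimpleGraph.fromRel_adj]
        simp only [hadj, false_iff]
        intro h
        have hd := h ⟨0, by omega⟩
        simp only [hL, hR, if_pos (Nat.zero_le k)] at hd
        have : σ 0 a = σ 0 b :=
          le_antisymm (le_trans (le_trans (le_max_left _ _) hd) (min_le_right _ _))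
            (le_trans (le_trans (le_max_right _ _) hd) (min_le_left _ _))
        exact hab (hσinj 0 a b this)
      · exact hC a f
      · -- symmetric case
        have h1 : ((fullSubdivision (⊤ : SimpleGraph (Fin n))).Adj (Sum.inr e) (Sum.inl b) ↔
            (fullSubdivision (⊤ : SimpleGraph (Fin n))).Adj (Sum.inl b) (Sum.inr e)) :=
          SimpleGraph.adj_comm _ _ _
        rw [h1, hC b e]
        exact forall_congr' (fun d => by rw [max_comm, min_comm])
      · -- two subdivision vertices: never adjacent
        have hef : e ≠ f := fun h' => hne (by rw [h'])
        have hadj : ¬ (fullSubdivision (⊤ : SimpleGraph (Fin n))).Adj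
            (Sum.inr e) (Sum.inr f) := by
          simp [fullSubdivision, SimpleGraph.fromRel_adj]
        simp only [hadj, false_iff]
        intro h
        have hd := h ⟨k + 1, by omega⟩
        simp only [hL, hR, if_neg (by omega : ¬ (k + 1 ≤ k))] at hd
        have : φ e = φ f :=
          le_antisymm (le_trans (le_trans (le_max_left _ _) hd) (min_le_right _ _))
            (le_trans (le_trans (le_max_right _ _) hd) (min_le_left _ _))
        have : eqv e = eqv f := Fin.val_injective (Nat.cast_injective this)
        exact hef (eqv.injective this)
  exact Nat.sInf_le hbox
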